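/- In the symmetric Bertrand duopoly with uniform costs, all-or-nothing demand, and two-piece piecewise linear strategies parametrized by slopes (x₁, x₂), the symmetric game gradient is v₁(x) = -7/48 - (3x₂)/(48x₁) + 5/(48x₁) and v₂(x) = -1/3 - x₂/(8x₁) + 3/(16x₁) + 1/(24x₂), for x₁, x₂ > 0. -/

import Mathlib

/-- The price function induced by two-piece piecewise-linear slopes `x = (x₁,x₂)`:
`p₁(x,c) = x₁·c + 1 - (x₁+x₂)/2` on `[0,1/2]` and `p₂(x,c) = x₂(c-1/2) + 1 - x₂/2`
on `(1/2,1]`. -/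
noncomputable def price (x : ℝ × ℝ) (c : ℝ) : ℝ :=
  if c ≤ 1 / 2 then x.1 * c + 1 - (x.1 + x.2) / 2
  else x.2 * (c - 1 / 2) + 1 - x.2 / 2

/-- Expected utility of a player with slopes `x` against an opponent with slopes `x'`
under all-or-nothing demand and uniform costs: the winning probability is the mass of
opponent costs with a strictly higher price. -/
noncomputable def expUtil (x x' : ℝ × ℝ) : ℝ :=
  ∫ c in (0 : ℝ)..1, (price x c - c) *
    ∫ z in (0 : ℝ)..1, (if price x c < price x' z then (1 : ℝ) else 0)

open MeasureTheory intervalIntegral Set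

/-- closed form of winning probability -/
noncomputable def Wfun (a b p : ℝ) : ℝ :=
  (1/2 - min (1/2) (max 0 ((p - (1 - (a+b)/2))/a))) + (1 - min 1 (max (1/2) ((p - (1-b))/b)))

lemma price_mono (a b : ℝ) (ha : 0 ≤ a) (hb : 0 ≤ b) : Monotone (price (a, b)) := by
  intro z w hzw
  unfold price
  split_ifs with hz hw hw <;> simp only [not_le] at * <;> nlinarith

lemma indicator_mono (a b p : ℝ) (ha : 0 ≤ a) (hb : 0 ≤ b) :
    Monotone (fun z => if p < price (a,b) z then (1:ℝ) else 0) := by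
  intro z w hzw
  dsimp only
  split_ifs with h1 h2 h2
  · exact le_rfl
  · exact absurd (lt_of_lt_of_le h1 (price_mono a b ha hb hzw)) h2
  · norm_num
  · exact le_rfl

/-- integral of a step indicator over an interval -/
lemma indInt (s lo hi : ℝ) (h : lo ≤ hi) :
    (∫ z in lo..hi, (if s < z then (1:ℝ) else 0)) = hi - min hi (max lo s) := by
  have hmono : Monotone (fun z : ℝ => if s < z then (1:ℝ) else 0) := by
    intro z w hzw; dsimp only; split_ifs with h1 h2 h2
    · exact le_rfl
    · exact absurd (lt_of_lt_of_le h1 hzw) h2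
    · norm_num
    · exact le_rfl
  rcases le_total s lo with hs | hs
  · have e : ∀ᵐ z ∂(volume : Measure ℝ), z ∈ Set.uIoc lo hi →
        (if s < z then (1:ℝ) else 0) = 1 := by
      refine Filter.Eventually.of_forall (fun z hz => ?_)
      rw [Set.uIoc_of_le h] at hz
      rw [if_pos (lt_of_le_of_lt hs hz.1)]
    rw [intervalIntegral.integral_congr_ae e, intervalIntegral.integral_const,
      max_eq_left hs, min_eq_right h, smul_eq_mul, mul_one]
  rcases le_total hi s with hs2 | hs2
  · have e : ∀ᵐ z ∂(volume : Measure ℝ), z ∈ Set.uIoc lo hi →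
        (if s < z then (1:ℝ) else 0) = 0 := by
      refine Filter.Eventually.of_forall (fun z hz => ?_)
      rw [Set.uIoc_of_le h] at hz
      rw [if_neg (not_lt.mpr (le_trans hz.2 hs2))]
    rw [intervalIntegral.integral_congr_ae e, intervalIntegral.integral_const,
      max_eq_right hs, min_eq_left hs2, smul_zero]
    ring
  · rw [max_eq_right hs, min_eq_right hs2]
    rw [← intervalIntegral.integral_add_adjacent_intervals (b := s)
      (hmono.intervalIntegrable) (hmono.intervalIntegrable)]
    have e1 : (∫ z in lo..s, (if s < z then (1:ℝ) else 0)) = 0 := by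
      have e : ∀ᵐ z ∂(volume : Measure ℝ), z ∈ Set.uIoc lo s →
          (if s < z then (1:ℝ) else 0) = 0 := by
        refine Filter.Eventually.of_forall (fun z hz => ?_)
        rw [Set.uIoc_of_le hs] at hz
        rw [if_neg (not_lt.mpr hz.2)]
      rw [intervalIntegral.integral_congr_ae e, intervalIntegral.integral_const, smul_zero]
    have e2 : (∫ z in s..hi, (if s < z then (1:ℝ) else 0)) = hi - s := by
      have e : ∀ᵐ z ∂(volume : Measure ℝ), z ∈ Set.uIoc s hi →
          (if s < z then (1:ℝ) else 0) = 1 := by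
        refine Filter.Eventually.of_forall (fun z hz => ?_)
        rw [Set.uIoc_of_le hs2] at hz
        rw [if_pos hz.1]
      rw [intervalIntegral.integral_congr_ae e, intervalIntegral.integral_const,
        smul_eq_mul, mul_one]
    rw [e1, e2, zero_add]

lemma inner_eq (a b p : ℝ) (ha : 0 < a) (hb : 0 < b) :
    (∫ z in (0:ℝ)..1, if p < price (a,b) z then (1:ℝ) else 0) = Wfun a b p := by
  have hint : ∀ u v : ℝ, IntervalIntegrable
      (fun z => if p < price (a,b) z then (1:ℝ) else 0) volume u v :=
    fun u v => (indicator_mono a b p ha.le hb.le).intervalIntegrable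
  rw [← intervalIntegral.integral_add_adjacent_intervals (b := 1/2) (hint 0 (1/2)) (hint (1/2) 1)]
  have e1 : (∫ z in (0:ℝ)..(1/2), if p < price (a,b) z then (1:ℝ) else 0)
      = ∫ z in (0:ℝ)..(1/2), (if (p - (1 - (a+b)/2))/a < z then (1:ℝ) else 0) := by
    refine intervalIntegral.integral_congr_ae (Filter.Eventually.of_forall (fun z hz => ?_))
    rw [Set.uIoc_of_le (by norm_num : (0:ℝ) ≤ 1/2)] at hz
    have : price (a,b) z = a * z + 1 - (a+b)/2 := by unfold price; rw [if_pos hz.2]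
    rw [this]
    congr 1
    rw [eq_iff_iff, div_lt_iff₀ ha]
    constructor <;> intro <;> nlinarith
  have e2 : (∫ z in (1/2:ℝ)..1, if p < price (a,b) z then (1:ℝ) else 0)
      = ∫ z in (1/2:ℝ)..1, (if (p - (1-b))/b < z then (1:ℝ) else 0) := by
    refine intervalIntegral.integral_congr_ae (Filter.Eventually.of_forall (fun z hz => ?_))
    rw [Set.uIoc_of_le (by norm_num : (1/2:ℝ) ≤ 1)] at hz
    have : price (a,b) z = b * (z - 1/2) + 1 - b/2 := by
      unfold price; rw [if_neg (not_le.mpr hz.1)]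
    rw [this]
    congr 1
    rw [eq_iff_iff, div_lt_iff₀ hb]
    constructor <;> intro <;> nlinarith
  rw [e1, e2, indInt _ _ _ (by norm_num), indInt _ _ _ (by norm_num), Wfun]

lemma continuous_price (y : ℝ × ℝ) : Continuous (price y) := by
  unfold price
  apply Continuous.if_le
  · fun_prop
  · fun_prop
  · exact continuous_id
  · exact continuous_const
  · intro x hx; rw [hx]; ring

lemma continuous_Wfun (a b : ℝ) : Continuous (Wfun a b) := by
  unfold Wfun
  fun_prop

lemma expUtil_rep (y : ℝ × ℝ) (a b : ℝ) (ha : 0 < a) (hb : 0 < b) :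
    expUtil y (a,b) = ∫ c in (0:ℝ)..1, (price y c - c) * Wfun a b (price y c) := by
  unfold expUtil
  refine intervalIntegral.integral_congr (fun c _ => ?_)
  rw [inner_eq a b _ ha hb]

lemma integ2 (p q r s lo hi : ℝ) :
    (∫ c in lo..hi, (p + q*c) * (r + s*c)) =
      p*r*(hi-lo) + (p*s+q*r)*(hi^2-lo^2)/2 + q*s*(hi^3-lo^3)/3 := by
  have h : ∀ c : ℝ, HasDerivAt (fun c => p*r*c + (p*s+q*r)*c^2/2 + q*s*c^3/3)
      ((p + q*c) * (r + s*c)) c := by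
    intro c
    have h1 := ((hasDerivAt_pow 1 c).const_mul (p*r))
    have h2 := (((hasDerivAt_pow 2 c).const_mul (p*s+q*r)).div_const 2)
    have h3 := (((hasDerivAt_pow 3 c).const_mul (q*s)).div_const 3)
    convert (h1.add h2).add h3 using 1
    · rfl
    · rfl
    · funext x; simp only [Pi.add_apply]; ring
    · ring
  rw [intervalIntegral.integral_eq_sub_of_hasDerivAt (fun c _ => h c)
    ((by fun_prop : Continuous fun c : ℝ => (p + q*c) * (r + s*c)).intervalIntegrable _ _)]
  ring

lemma hasDerivAt_model (A0 A1 A2 A3 Am1 Am2 t : ℝ) (ht : t ≠ 0) :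
    HasDerivAt (fun s => A0 + A1*s + A2*s^2 + A3*s^3 + Am1/s + Am2/s^2)
      (A1 + 2*A2*t + 3*A3*t^2 - Am1/t^2 - 2*Am2/t^3) t := by
  have h0 : HasDerivAt (fun _ : ℝ => A0) 0 t := hasDerivAt_const _ _
  have h1 := (hasDerivAt_id t).const_mul A1
  have h2 := (hasDerivAt_pow 2 t).const_mul A2
  have h3 := (hasDerivAt_pow 3 t).const_mul A3
  have h4 : HasDerivAt (fun s : ℝ => Am1 / s) (-(Am1 / t^2)) t := by
    have := (hasDerivAt_inv ht).const_mul Am1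
    simp only [div_eq_mul_inv]
    convert this using 1
    · rfl
    · rfl
    · ring
  have h5 : HasDerivAt (fun s : ℝ => Am2 / s^2) (-(2*Am2/t^3)) t := by
    have := ((hasDerivAt_pow 2 t).inv (pow_ne_zero 2 ht)).const_mul Am2
    simp only [div_eq_mul_inv]
    convert this using 1
    · rfl
    · rfl
    · rfl
    · field_simp; ring
  have := ((((h0.add h1).add h2).add h3).add h4).add h5
  convert this using 1
  · rfl
  · rfl
  · rfl
  · push_cast; ring

lemma integrand_cont (y : ℝ × ℝ) (a b : ℝ) :
    Continuous (fun c => (price y c - c) * Wfun a b (price y c)) :=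
  ((continuous_price y).sub continuous_id).mul ((continuous_Wfun a b).comp (continuous_price y))

/-- the common upper piece [1/2,1]: deviator plays slopes (y1, b) -/
lemma piece_upper (y1 a b t : ℝ) (ha : 0 < a) (hb : 0 < b) (htb : b ≤ t + b) :
    (∫ c in (1/2:ℝ)..1, (price (y1,b) c - c) * Wfun a b (price (y1,b) c))
      = ∫ c in (1/2:ℝ)..1, ((1-b) + (b-1)*c) * (1 + (-1)*c) := by
  refine intervalIntegral.integral_congr_ae (Filter.Eventually.of_forall (fun c hc => ?_))
  rw [Set.uIoc_of_le (by norm_num : (1/2:ℝ) ≤ 1)] at hc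
  have hp : price (y1,b) c = b*(c-1/2) + 1 - b/2 := by
    unfold price; rw [if_neg (not_le.mpr hc.1)]
  rw [hp]
  unfold Wfun
  have m1 : max 0 ((b*(c-1/2) + 1 - b/2 - (1 - (a+b)/2))/a)
      = (b*(c-1/2) + 1 - b/2 - (1 - (a+b)/2))/a :=
    max_eq_right (div_nonneg (by nlinarith [hc.1, hc.2]) ha.le)
  have m2 : min (1/2) ((b*(c-1/2) + 1 - b/2 - (1 - (a+b)/2))/a) = 1/2 :=
    min_eq_left ((le_div_iff₀ ha).mpr (by nlinarith [hc.1, hc.2]))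
  have m3 : max (1/2) ((b*(c-1/2) + 1 - b/2 - (1-b))/b)
      = (b*(c-1/2) + 1 - b/2 - (1-b))/b :=
    max_eq_right ((le_div_iff₀ hb).mpr (by nlinarith [hc.1, hc.2]))
  have m4 : min 1 ((b*(c-1/2) + 1 - b/2 - (1-b))/b) = (b*(c-1/2) + 1 - b/2 - (1-b))/b :=
    min_eq_right ((div_le_iff₀ hb).mpr (by nlinarith [hc.1, hc.2]))
  rw [m1, m2, m3, m4]
  field_simp
  ring

lemma branch1lo (a b t : ℝ) (ha : 0 < a) (hb : 0 < b) (ht : 0 < t) (hta : t ≤ a) :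
    expUtil (t,b) (a,b) = (11/48 + (-1/6)*b) + ((5/48)/a + (-1/16)*b/a + (-1/16))*t
      + ((-1/24)/a)*t^2 + 0*t^3 + 0/t + 0/t^2 := by
  rw [expUtil_rep _ a b ha hb]
  have hint : ∀ u v : ℝ, IntervalIntegrable
      (fun c => (price (t,b) c - c) * Wfun a b (price (t,b) c)) volume u v :=
    fun u v => (integrand_cont (t,b) a b).intervalIntegrable u v
  rw [← intervalIntegral.integral_add_adjacent_intervals (b := 1/2) (hint _ _) (hint _ _)]
  have e1 : (∫ c in (0:ℝ)..(1/2), (price (t,b) c - c) * Wfun a b (price (t,b) c))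
      = ∫ c in (0:ℝ)..(1/2), ((1-(t+b)/2) + (t-1)*c) * ((1/2 + t/(2*a)) + (-(t/a))*c) := by
    refine intervalIntegral.integral_congr_ae (Filter.Eventually.of_forall (fun c hc => ?_))
    rw [Set.uIoc_of_le (by norm_num : (0:ℝ) ≤ 1/2)] at hc
    have hp : price (t,b) c = t*c + 1 - (t+b)/2 := by
      unfold price; rw [if_pos hc.2]
    rw [hp]
    unfold Wfun
    have m1 : max 0 ((t*c + 1 - (t+b)/2 - (1 - (a+b)/2))/a)
        = (t*c + 1 - (t+b)/2 - (1 - (a+b)/2))/a :=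
      max_eq_right (div_nonneg (by nlinarith [hc.1, hc.2]) ha.le)
    have m2 : min (1/2) ((t*c + 1 - (t+b)/2 - (1 - (a+b)/2))/a)
        = (t*c + 1 - (t+b)/2 - (1 - (a+b)/2))/a :=
      min_eq_right ((div_le_iff₀ ha).mpr (by nlinarith [hc.1, hc.2]))
    have m3 : max (1/2) ((t*c + 1 - (t+b)/2 - (1-b))/b) = 1/2 :=
      max_eq_left ((div_le_iff₀ hb).mpr (by nlinarith [hc.1, hc.2]))
    rw [m1, m2, m3]
    norm_num
    field_simp
    ring
  rw [e1, piece_upper t a b t ha hb (by linarith), integ2, integ2]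
  field_simp
  ring

set_option maxHeartbeats 1000000 in
lemma branch1hi (a b t : ℝ) (ha : 0 < a) (hb : 0 < b) (hta : a ≤ t) :
    expUtil (t,b) (a,b) = (5/12 + (-7/24)*b) + (-1/8)*t + 0*t^2 + 0*t^3
      + ((-1/16)*a + (1/16)*a*b + (1/48)*a^2)/t + ((-1/48)*a^2)/t^2 := by
  have ht : 0 < t := lt_of_lt_of_le ha hta
  obtain ⟨c₀, hc₀def⟩ : ∃ y : ℝ, y = 1/2 - a/(2*t) := ⟨_, rfl⟩
  have hkey : t * c₀ = t/2 - a/2 := by rw [hc₀def]; field_simp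
  have hc₀0 : 0 ≤ c₀ := by
    rw [hc₀def, sub_nonneg, div_le_iff₀ (by positivity)]; linarith
  have hc₀h : c₀ ≤ 1/2 := by
    rw [hc₀def]; have : 0 ≤ a/(2*t) := by positivity
    linarith
  rw [expUtil_rep _ a b ha hb]
  have hint : ∀ u v : ℝ, IntervalIntegrable
      (fun c => (price (t,b) c - c) * Wfun a b (price (t,b) c)) volume u v :=
    fun u v => (integrand_cont (t,b) a b).intervalIntegrable u v
  rw [← intervalIntegral.integral_add_adjacent_intervals (b := 1/2) (hint _ _) (hint _ _),
      ← intervalIntegral.integral_add_adjacent_intervals (a := 0) (b := c₀) (hint _ _) (hint _ _)]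
  have e1 : (∫ c in (0:ℝ)..c₀, (price (t,b) c - c) * Wfun a b (price (t,b) c))
      = ∫ c in (0:ℝ)..c₀, ((1-(t+b)/2) + (t-1)*c) * (1 + (0:ℝ)*c) := by
    refine intervalIntegral.integral_congr_ae (Filter.Eventually.of_forall (fun c hc => ?_))
    rw [Set.uIoc_of_le hc₀0] at hc
    have hcu : t * c ≤ t/2 - a/2 := by
      have := mul_le_mul_of_nonneg_left hc.2 ht.le
      rw [hkey] at this; linarith
    have hch : c ≤ 1/2 := le_trans hc.2 hc₀h
    have hp : price (t,b) c = t*c + 1 - (t+b)/2 := by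
      unfold price; rw [if_pos hch]
    rw [hp]
    unfold Wfun
    have m1 : max 0 ((t*c + 1 - (t+b)/2 - (1 - (a+b)/2))/a) = 0 :=
      max_eq_left (div_nonpos_of_nonpos_of_nonneg (by nlinarith) ha.le)
    have m3 : max (1/2) ((t*c + 1 - (t+b)/2 - (1-b))/b) = 1/2 :=
      max_eq_left ((div_le_iff₀ hb).mpr (by nlinarith [hc.1]))
    rw [m1, m3]
    norm_num
    ring
  have e2 : (∫ c in c₀..(1/2), (price (t,b) c - c) * Wfun a b (price (t,b) c))
      = ∫ c in c₀..(1/2), ((1-(t+b)/2) + (t-1)*c) * ((1/2 + t/(2*a)) + (-(t/a))*c) := by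
    refine intervalIntegral.integral_congr_ae (Filter.Eventually.of_forall (fun c hc => ?_))
    rw [Set.uIoc_of_le hc₀h] at hc
    have hcl : t/2 - a/2 ≤ t * c := by
      have := mul_le_mul_of_nonneg_left hc.1.le ht.le
      rw [hkey] at this; linarith
    have hp : price (t,b) c = t*c + 1 - (t+b)/2 := by
      unfold price; rw [if_pos hc.2]
    rw [hp]
    unfold Wfun
    have m1 : max 0 ((t*c + 1 - (t+b)/2 - (1 - (a+b)/2))/a)
        = (t*c + 1 - (t+b)/2 - (1 - (a+b)/2))/a :=
      max_eq_right (div_nonneg (by nlinarith) ha.le)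
    have m2 : min (1/2) ((t*c + 1 - (t+b)/2 - (1 - (a+b)/2))/a)
        = (t*c + 1 - (t+b)/2 - (1 - (a+b)/2))/a :=
      min_eq_right ((div_le_iff₀ ha).mpr (by nlinarith [hc.2]))
    have m3 : max (1/2) ((t*c + 1 - (t+b)/2 - (1-b))/b) = 1/2 :=
      max_eq_left ((div_le_iff₀ hb).mpr (by nlinarith [hc.2]))
    rw [m1, m2, m3]
    norm_num
    field_simp
    ring
  rw [e1, e2, piece_upper t a b t ha hb (by linarith), integ2, integ2, integ2, hc₀def]
  field_simp
  ring

set_option maxHeartbeats 1000000 in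
lemma branch2lo (a b t : ℝ) (ha : 0 < a) (hb : 0 < b) (ht : 0 < t) (htb : t ≤ b)
    (hd : b - t ≤ a) :
    expUtil (a,t) (a,b) = ((1/48)*b^3/a^3 + (1/24)*b^2/a^2 + (-1/48)*b^3/a^2 + (-1/4)*b/a
        + (1/48)*b^2/a + (7/24) + (1/16)*b + (-5/48)*a)
      + ((-1/16)*b^2/a^3 + (-1/16)*b/a^2 + (5/16)/a + (1/8)*b/a + (1/24)/b + (-1/4))*t
      + ((1/16)*b/a^3 + (1/16)*b/a^2 + (-1/16)/(a*b) + (-3/16)/a + (-1/24)/b)*t^2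
      + ((-1/48)/a^3 + (1/48)/(a^2*b) + (-1/24)/a^2 + (1/24)/(a*b))*t^3 + 0/t + 0/t^2 := by
  obtain ⟨m, hm⟩ : ∃ y : ℝ, y = 1/2 - (b-t)/(2*a) := ⟨_, rfl⟩
  have hkey : a * m = a/2 - (b-t)/2 := by rw [hm]; field_simp
  have hm0 : 0 ≤ m := by
    rw [hm, sub_nonneg, div_le_iff₀ (by positivity)]; linarith
  have hmh : m ≤ 1/2 := by
    rw [hm]; have : 0 ≤ (b-t)/(2*a) := div_nonneg (by linarith) (by positivity)
    linarith
  rw [expUtil_rep _ a b ha hb]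
  have hint : ∀ u v : ℝ, IntervalIntegrable
      (fun c => (price (a,t) c - c) * Wfun a b (price (a,t) c)) volume u v :=
    fun u v => (integrand_cont (a,t) a b).intervalIntegrable u v
  rw [← intervalIntegral.integral_add_adjacent_intervals (b := 1/2) (hint _ _) (hint _ _),
      ← intervalIntegral.integral_add_adjacent_intervals (a := 0) (b := m) (hint _ _) (hint _ _)]
  have e1 : (∫ c in (0:ℝ)..m, (price (a,t) c - c) * Wfun a b (price (a,t) c))
      = ∫ c in (0:ℝ)..m, ((1 - (a+t)/2) + (a-1)*c) * ((1 - (b-t)/(2*a)) + (-1)*c) := by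
    refine intervalIntegral.integral_congr_ae (Filter.Eventually.of_forall (fun c hc => ?_))
    rw [Set.uIoc_of_le hm0] at hc
    have hcu : a * c ≤ a/2 - (b-t)/2 := by
      have := mul_le_mul_of_nonneg_left hc.2 ha.le
      rw [hkey] at this; linarith
    have hch : c ≤ 1/2 := le_trans hc.2 hmh
    have hp : price (a,t) c = a*c + 1 - (a+t)/2 := by
      unfold price; rw [if_pos hch]
    rw [hp]
    unfold Wfun
    have m1 : max 0 ((a*c + 1 - (a+t)/2 - (1 - (a+b)/2))/a)
        = (a*c + 1 - (a+t)/2 - (1 - (a+b)/2))/a :=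
      max_eq_right (div_nonneg (by nlinarith [hc.1]) ha.le)
    have m2 : min (1/2) ((a*c + 1 - (a+t)/2 - (1 - (a+b)/2))/a)
        = (a*c + 1 - (a+t)/2 - (1 - (a+b)/2))/a :=
      min_eq_right ((div_le_iff₀ ha).mpr (by nlinarith))
    have m3 : max (1/2) ((a*c + 1 - (a+t)/2 - (1-b))/b) = 1/2 :=
      max_eq_left ((div_le_iff₀ hb).mpr (by nlinarith))
    rw [m1, m2, m3]
    norm_num
    field_simp
    ring
  have e2 : (∫ c in m..(1/2), (price (a,t) c - c) * Wfun a b (price (a,t) c))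
      = ∫ c in m..(1/2), ((1 - (a+t)/2) + (a-1)*c) * (((t/2+a/2)/b) + (-(a/b))*c) := by
    refine intervalIntegral.integral_congr_ae (Filter.Eventually.of_forall (fun c hc => ?_))
    rw [Set.uIoc_of_le hmh] at hc
    have hcl : a/2 - (b-t)/2 ≤ a * c := by
      have := mul_le_mul_of_nonneg_left hc.1.le ha.le
      rw [hkey] at this; linarith
    have hp : price (a,t) c = a*c + 1 - (a+t)/2 := by
      unfold price; rw [if_pos hc.2]
    rw [hp]
    unfold Wfun
    have m1 : max 0 ((a*c + 1 - (a+t)/2 - (1 - (a+b)/2))/a)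
        = (a*c + 1 - (a+t)/2 - (1 - (a+b)/2))/a :=
      max_eq_right (div_nonneg (by nlinarith) ha.le)
    have m2 : min (1/2) ((a*c + 1 - (a+t)/2 - (1 - (a+b)/2))/a) = 1/2 :=
      min_eq_left ((le_div_iff₀ ha).mpr (by nlinarith))
    have m3 : max (1/2) ((a*c + 1 - (a+t)/2 - (1-b))/b)
        = (a*c + 1 - (a+t)/2 - (1-b))/b :=
      max_eq_right ((le_div_iff₀ hb).mpr (by nlinarith))
    have m4 : min 1 ((a*c + 1 - (a+t)/2 - (1-b))/b)
        = (a*c + 1 - (a+t)/2 - (1-b))/b :=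
      min_eq_right ((div_le_iff₀ hb).mpr (by nlinarith [hc.2]))
    rw [m1, m2, m3, m4]
    field_simp
    ring
  have e3 : (∫ c in (1/2:ℝ)..1, (price (a,t) c - c) * Wfun a b (price (a,t) c))
      = ∫ c in (1/2:ℝ)..1, ((1-t) + (t-1)*c) * ((t/b) + (-(t/b))*c) := by
    refine intervalIntegral.integral_congr_ae (Filter.Eventually.of_forall (fun c hc => ?_))
    rw [Set.uIoc_of_le (by norm_num : (1/2:ℝ) ≤ 1)] at hc
    have hp : price (a,t) c = t*(c-1/2) + 1 - t/2 := by
      unfold price; rw [if_neg (not_le.mpr hc.1)]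
    rw [hp]
    unfold Wfun
    have m1 : max 0 ((t*(c-1/2) + 1 - t/2 - (1 - (a+b)/2))/a)
        = (t*(c-1/2) + 1 - t/2 - (1 - (a+b)/2))/a :=
      max_eq_right (div_nonneg (by nlinarith [hc.1, hc.2, mul_le_mul_of_nonneg_left hc.2 ht.le]) ha.le)
    have m2 : min (1/2) ((t*(c-1/2) + 1 - t/2 - (1 - (a+b)/2))/a) = 1/2 :=
      min_eq_left ((le_div_iff₀ ha).mpr (by nlinarith [hc.1, mul_le_mul_of_nonneg_left hc.1.le ht.le]))
    have m3 : max (1/2) ((t*(c-1/2) + 1 - t/2 - (1-b))/b)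
        = (t*(c-1/2) + 1 - t/2 - (1-b))/b :=
      max_eq_right ((le_div_iff₀ hb).mpr (by nlinarith [mul_le_mul_of_nonneg_left hc.1.le ht.le]))
    have m4 : min 1 ((t*(c-1/2) + 1 - t/2 - (1-b))/b)
        = (t*(c-1/2) + 1 - t/2 - (1-b))/b :=
      min_eq_right ((div_le_iff₀ hb).mpr (by nlinarith [mul_le_mul_of_nonneg_left hc.2 ht.le]))
    rw [m1, m2, m3, m4]
    field_simp
    ring
  rw [e1, e2, e3, integ2, integ2, integ2, hm]
  field_simp
  ring

set_option maxHeartbeats 1000000 in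
lemma branch2hi (a b t : ℝ) (ha : 0 < a) (hb : 0 < b) (htb : b ≤ t) (hd : t ≤ a + b) :
    expUtil (a,t) (a,b) = ((-1/48)*b^3/a^3 + (-1/8)*b^2/a^2 + (1/48)*b^3/a^2 + (-1/4)*b/a
        + (1/16)*b^2/a + (17/48) + (1/16)*b + (-5/48)*a)
      + ((1/16)*b^2/a^3 + (1/4)*b/a^2 + (11/48)/a + (1/16)*b/a + (-5/16))*t
      + ((-1/16)*b/a^3 + (-1/8)/a^2 + (-1/16)*b/a^2 + (-5/48)/a)*t^2
      + ((1/48)/a^3 + (1/24)/a^2)*t^3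
      + ((-1/48)*b^3/a + (1/48)*b^2)/t + ((1/48)*b^3/a + (-1/48)*b^2)/t^2 := by
  have ht : 0 < t := lt_of_lt_of_le hb htb
  obtain ⟨e, he⟩ : ∃ y : ℝ, y = (t-b)/(2*a) := ⟨_, rfl⟩
  obtain ⟨m, hm⟩ : ∃ y : ℝ, y = 1 - b/(2*t) := ⟨_, rfl⟩
  have hkeye : a * e = (t-b)/2 := by rw [he]; field_simp
  have hkeym : t * m = t - b/2 := by rw [hm]; field_simp
  have he0 : 0 ≤ e := by rw [he]; exact div_nonneg (by linarith) (by positivity)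
  have heh : e ≤ 1/2 := by rw [he, div_le_iff₀ (by positivity)]; linarith
  have hmh : 1/2 ≤ m := by
    have : b/(2*t) ≤ 1/2 := by rw [div_le_iff₀ (by positivity)]; linarith
    rw [hm]; linarith
  have hm1 : m ≤ 1 := by
    rw [hm]; have : 0 ≤ b/(2*t) := by positivity
    linarith
  rw [expUtil_rep _ a b ha hb]
  have hint : ∀ u v : ℝ, IntervalIntegrable
      (fun c => (price (a,t) c - c) * Wfun a b (price (a,t) c)) volume u v :=
    fun u v => (integrand_cont (a,t) a b).intervalIntegrable u v
  rw [← intervalIntegral.integral_add_adjacent_intervals (b := 1/2) (hint _ _) (hint _ _),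
      ← intervalIntegral.integral_add_adjacent_intervals (a := 0) (b := e) (hint _ _) (hint _ _),
      ← intervalIntegral.integral_add_adjacent_intervals (a := 1/2) (b := m) (hint _ _) (hint _ _)]
  have e1 : (∫ c in (0:ℝ)..e, (price (a,t) c - c) * Wfun a b (price (a,t) c))
      = ∫ c in (0:ℝ)..e, ((1 - (a+t)/2) + (a-1)*c) * (1 + (0:ℝ)*c) := by
    refine intervalIntegral.integral_congr_ae (Filter.Eventually.of_forall (fun c hc => ?_))
    rw [Set.uIoc_of_le he0] at hc
    have hcu : a * c ≤ (t-b)/2 := by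
      have := mul_le_mul_of_nonneg_left hc.2 ha.le
      rw [hkeye] at this; linarith
    have hch : c ≤ 1/2 := le_trans hc.2 heh
    have hp : price (a,t) c = a*c + 1 - (a+t)/2 := by
      unfold price; rw [if_pos hch]
    rw [hp]
    unfold Wfun
    have m1 : max 0 ((a*c + 1 - (a+t)/2 - (1 - (a+b)/2))/a) = 0 :=
      max_eq_left (div_nonpos_of_nonpos_of_nonneg (by nlinarith) ha.le)
    have m3 : max (1/2) ((a*c + 1 - (a+t)/2 - (1-b))/b) = 1/2 :=
      max_eq_left ((div_le_iff₀ hb).mpr (by nlinarith))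
    rw [m1, m3]
    norm_num
    ring
  have e2 : (∫ c in e..(1/2), (price (a,t) c - c) * Wfun a b (price (a,t) c))
      = ∫ c in e..(1/2), ((1 - (a+t)/2) + (a-1)*c) * ((1 + (t-b)/(2*a)) + (-1)*c) := by
    refine intervalIntegral.integral_congr_ae (Filter.Eventually.of_forall (fun c hc => ?_))
    rw [Set.uIoc_of_le heh] at hc
    have hcl : (t-b)/2 ≤ a * c := by
      have := mul_le_mul_of_nonneg_left hc.1.le ha.le
      rw [hkeye] at this; linarith
    have hcu : a * c ≤ a/2 := by nlinarith [hc.2]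
    have hp : price (a,t) c = a*c + 1 - (a+t)/2 := by
      unfold price; rw [if_pos hc.2]
    rw [hp]
    unfold Wfun
    have m1 : max 0 ((a*c + 1 - (a+t)/2 - (1 - (a+b)/2))/a)
        = (a*c + 1 - (a+t)/2 - (1 - (a+b)/2))/a :=
      max_eq_right (div_nonneg (by nlinarith) ha.le)
    have m2 : min (1/2) ((a*c + 1 - (a+t)/2 - (1 - (a+b)/2))/a)
        = (a*c + 1 - (a+t)/2 - (1 - (a+b)/2))/a :=
      min_eq_right ((div_le_iff₀ ha).mpr (by nlinarith))
    have m3 : max (1/2) ((a*c + 1 - (a+t)/2 - (1-b))/b) = 1/2 :=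
      max_eq_left ((div_le_iff₀ hb).mpr (by nlinarith))
    rw [m1, m2, m3]
    norm_num
    field_simp
    ring
  have e3 : (∫ c in (1/2:ℝ)..m, (price (a,t) c - c) * Wfun a b (price (a,t) c))
      = ∫ c in (1/2:ℝ)..m, ((1-t) + (t-1)*c) * ((1 + t/a - (a+b)/(2*a)) + (-(t/a))*c) := by
    refine intervalIntegral.integral_congr_ae (Filter.Eventually.of_forall (fun c hc => ?_))
    rw [Set.uIoc_of_le hmh] at hc
    have hcu : t * c ≤ t - b/2 := by
      have := mul_le_mul_of_nonneg_left hc.2 ht.le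
      rw [hkeym] at this; linarith
    have hcl : t/2 ≤ t * c := by nlinarith [hc.1]
    have hch : c ≤ 1 := le_trans hc.2 hm1
    have hp : price (a,t) c = t*(c-1/2) + 1 - t/2 := by
      unfold price; rw [if_neg (not_le.mpr hc.1)]
    rw [hp]
    unfold Wfun
    have m1 : max 0 ((t*(c-1/2) + 1 - t/2 - (1 - (a+b)/2))/a)
        = (t*(c-1/2) + 1 - t/2 - (1 - (a+b)/2))/a :=
      max_eq_right (div_nonneg (by nlinarith) ha.le)
    have m2 : min (1/2) ((t*(c-1/2) + 1 - t/2 - (1 - (a+b)/2))/a)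
        = (t*(c-1/2) + 1 - t/2 - (1 - (a+b)/2))/a :=
      min_eq_right ((div_le_iff₀ ha).mpr (by nlinarith))
    have m3 : max (1/2) ((t*(c-1/2) + 1 - t/2 - (1-b))/b) = 1/2 :=
      max_eq_left ((div_le_iff₀ hb).mpr (by nlinarith))
    rw [m1, m2, m3]
    norm_num
    field_simp
    ring
  have e4 : (∫ c in m..(1:ℝ), (price (a,t) c - c) * Wfun a b (price (a,t) c))
      = ∫ c in m..(1:ℝ), ((1-t) + (t-1)*c) * ((t/b) + (-(t/b))*c) := by
    refine intervalIntegral.integral_congr_ae (Filter.Eventually.of_forall (fun c hc => ?_))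
    rw [Set.uIoc_of_le hm1] at hc
    have hcl : t - b/2 ≤ t * c := by
      have := mul_le_mul_of_nonneg_left hc.1.le ht.le
      rw [hkeym] at this; linarith
    have hcg : 1/2 < c := lt_of_le_of_lt hmh hc.1
    have hp : price (a,t) c = t*(c-1/2) + 1 - t/2 := by
      unfold price; rw [if_neg (not_le.mpr hcg)]
    rw [hp]
    unfold Wfun
    have m1 : max 0 ((t*(c-1/2) + 1 - t/2 - (1 - (a+b)/2))/a)
        = (t*(c-1/2) + 1 - t/2 - (1 - (a+b)/2))/a :=
      max_eq_right (div_nonneg (by nlinarith) ha.le)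
    have m2 : min (1/2) ((t*(c-1/2) + 1 - t/2 - (1 - (a+b)/2))/a) = 1/2 :=
      min_eq_left ((le_div_iff₀ ha).mpr (by nlinarith))
    have m3 : max (1/2) ((t*(c-1/2) + 1 - t/2 - (1-b))/b)
        = (t*(c-1/2) + 1 - t/2 - (1-b))/b :=
      max_eq_right ((le_div_iff₀ hb).mpr (by nlinarith))
    have m4 : min 1 ((t*(c-1/2) + 1 - t/2 - (1-b))/b)
        = (t*(c-1/2) + 1 - t/2 - (1-b))/b :=
      min_eq_right ((div_le_iff₀ hb).mpr (by nlinarith [mul_le_mul_of_nonneg_left hc.2 ht.le]))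
    rw [m1, m2, m3, m4]
    field_simp
    ring
  rw [e1, e2, e3, e4, integ2, integ2, integ2, integ2, he, hm]
  field_simp
  ring

set_option maxHeartbeats 4000000 in
/-- The symmetric game gradient of the two-piece Bertrand duopoly:
`v₁(x) = -7/48 - 3x₂/(48x₁) + 5/(48x₁)` and
`v₂(x) = -1/3 - x₂/(8x₁) + 3/(16x₁) + 1/(24x₂)` for `x₁, x₂ > 0`. -/
theorem stmt8 (x₁ x₂ : ℝ) (h1 : 0 < x₁) (h2 : 0 < x₂) :
    HasDerivAt (fun t => expUtil (t, x₂) (x₁, x₂))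
      (-7 / 48 - 3 * x₂ / (48 * x₁) + 5 / (48 * x₁)) x₁ ∧
    HasDerivAt (fun t => expUtil (x₁, t) (x₁, x₂))
      (-1 / 3 - x₂ / (8 * x₁) + 3 / (16 * x₁) + 1 / (24 * x₂)) x₂ := by
  constructor
  · -- first coordinate
    have Hlo := hasDerivAt_model (11/48 + (-1/6)*x₂)
      ((5/48)/x₁ + (-1/16)*x₂/x₁ + (-1/16)) ((-1/24)/x₁) 0 0 0 x₁ h1.ne'
    have hvlo : ((5/48)/x₁ + (-1/16)*x₂/x₁ + (-1/16)) + 2*((-1/24)/x₁)*x₁ + 3*0*x₁^2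
        - 0/x₁^2 - 2*0/x₁^3 = -7 / 48 - 3 * x₂ / (48 * x₁) + 5 / (48 * x₁) := by
      field_simp; ring
    rw [hvlo] at Hlo
    have Hhi := hasDerivAt_model (5/12 + (-7/24)*x₂) (-1/8) 0 0
      ((-1/16)*x₁ + (1/16)*x₁*x₂ + (1/48)*x₁^2) ((-1/48)*x₁^2) x₁ h1.ne'
    have hvhi : (-1/8 : ℝ) + 2*0*x₁ + 3*0*x₁^2
        - ((-1/16)*x₁ + (1/16)*x₁*x₂ + (1/48)*x₁^2)/x₁^2 - 2*((-1/48)*x₁^2)/x₁^3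
        = -7 / 48 - 3 * x₂ / (48 * x₁) + 5 / (48 * x₁) := by
      field_simp; ring
    rw [hvhi] at Hhi
    have HL : HasDerivWithinAt (fun t => expUtil (t, x₂) (x₁, x₂))
        (-7 / 48 - 3 * x₂ / (48 * x₁) + 5 / (48 * x₁)) (Set.Iic x₁) x₁ := by
      refine (Hlo.hasDerivWithinAt).congr_of_eventuallyEq ?_
        (branch1lo x₁ x₂ x₁ h1 h2 h1 le_rfl)
      filter_upwards [nhdsWithin_le_nhds (Ioi_mem_nhds h1), self_mem_nhdsWithin]
        with t ht0 ht1
      exact branch1lo x₁ x₂ t h1 h2 ht0 ht1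
    have HR : HasDerivWithinAt (fun t => expUtil (t, x₂) (x₁, x₂))
        (-7 / 48 - 3 * x₂ / (48 * x₁) + 5 / (48 * x₁)) (Set.Ici x₁) x₁ := by
      refine (Hhi.hasDerivWithinAt).congr
        (fun t ht => branch1hi x₁ x₂ t h1 h2 ht)
        (branch1hi x₁ x₂ x₁ h1 h2 le_rfl)
    have := HL.union HR
    rw [Set.Iic_union_Ici] at this
    exact hasDerivWithinAt_univ.mp this
  · -- second coordinate
    have Hlo := hasDerivAt_model
      ((1/48)*x₂^3/x₁^3 + (1/24)*x₂^2/x₁^2 + (-1/48)*x₂^3/x₁^2 + (-1/4)*x₂/x₁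
        + (1/48)*x₂^2/x₁ + (7/24) + (1/16)*x₂ + (-5/48)*x₁)
      ((-1/16)*x₂^2/x₁^3 + (-1/16)*x₂/x₁^2 + (5/16)/x₁ + (1/8)*x₂/x₁ + (1/24)/x₂ + (-1/4))
      ((1/16)*x₂/x₁^3 + (1/16)*x₂/x₁^2 + (-1/16)/(x₁*x₂) + (-3/16)/x₁ + (-1/24)/x₂)
      ((-1/48)/x₁^3 + (1/48)/(x₁^2*x₂) + (-1/24)/x₁^2 + (1/24)/(x₁*x₂)) 0 0 x₂ h2.ne'
    have hvlo : ((-1/16)*x₂^2/x₁^3 + (-1/16)*x₂/x₁^2 + (5/16)/x₁ + (1/8)*x₂/x₁ + (1/24)/x₂ + (-1/4))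
        + 2*((1/16)*x₂/x₁^3 + (1/16)*x₂/x₁^2 + (-1/16)/(x₁*x₂) + (-3/16)/x₁ + (-1/24)/x₂)*x₂
        + 3*((-1/48)/x₁^3 + (1/48)/(x₁^2*x₂) + (-1/24)/x₁^2 + (1/24)/(x₁*x₂))*x₂^2
        - 0/x₂^2 - 2*0/x₂^3
        = -1 / 3 - x₂ / (8 * x₁) + 3 / (16 * x₁) + 1 / (24 * x₂) := by
      field_simp; ring
    rw [hvlo] at Hlo
    have Hhi := hasDerivAt_model
      ((-1/48)*x₂^3/x₁^3 + (-1/8)*x₂^2/x₁^2 + (1/48)*x₂^3/x₁^2 + (-1/4)*x₂/x₁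
        + (1/16)*x₂^2/x₁ + (17/48) + (1/16)*x₂ + (-5/48)*x₁)
      ((1/16)*x₂^2/x₁^3 + (1/4)*x₂/x₁^2 + (11/48)/x₁ + (1/16)*x₂/x₁ + (-5/16))
      ((-1/16)*x₂/x₁^3 + (-1/8)/x₁^2 + (-1/16)*x₂/x₁^2 + (-5/48)/x₁)
      ((1/48)/x₁^3 + (1/24)/x₁^2)
      ((-1/48)*x₂^3/x₁ + (1/48)*x₂^2) ((1/48)*x₂^3/x₁ + (-1/48)*x₂^2) x₂ h2.ne'
    have hvhi : ((1/16)*x₂^2/x₁^3 + (1/4)*x₂/x₁^2 + (11/48)/x₁ + (1/16)*x₂/x₁ + (-5/16))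
        + 2*((-1/16)*x₂/x₁^3 + (-1/8)/x₁^2 + (-1/16)*x₂/x₁^2 + (-5/48)/x₁)*x₂
        + 3*((1/48)/x₁^3 + (1/24)/x₁^2)*x₂^2
        - ((-1/48)*x₂^3/x₁ + (1/48)*x₂^2)/x₂^2 - 2*((1/48)*x₂^3/x₁ + (-1/48)*x₂^2)/x₂^3
        = -1 / 3 - x₂ / (8 * x₁) + 3 / (16 * x₁) + 1 / (24 * x₂) := by
      field_simp; ring
    rw [hvhi] at Hhi
    have hl : max (x₂ - x₁) 0 < x₂ := by
      rw [max_lt_iff]; constructor <;> linarith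
    have HL : HasDerivWithinAt (fun t => expUtil (x₁, t) (x₁, x₂))
        (-1 / 3 - x₂ / (8 * x₁) + 3 / (16 * x₁) + 1 / (24 * x₂)) (Set.Iic x₂) x₂ := by
      refine (Hlo.hasDerivWithinAt).congr_of_eventuallyEq ?_
        (branch2lo x₁ x₂ x₂ h1 h2 h2 le_rfl (by linarith))
      filter_upwards [nhdsWithin_le_nhds (Ioi_mem_nhds hl), self_mem_nhdsWithin]
        with t ht0 ht1
      rw [Set.mem_Ioi, max_lt_iff] at ht0
      exact branch2lo x₁ x₂ t h1 h2 ht0.2 ht1 (by linarith [ht0.1])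
    have HR : HasDerivWithinAt (fun t => expUtil (x₁, t) (x₁, x₂))
        (-1 / 3 - x₂ / (8 * x₁) + 3 / (16 * x₁) + 1 / (24 * x₂)) (Set.Ici x₂) x₂ := by
      refine (Hhi.hasDerivWithinAt).congr_of_eventuallyEq ?_
        (branch2hi x₁ x₂ x₂ h1 h2 le_rfl (by linarith))
      filter_upwards [nhdsWithin_le_nhds (Iio_mem_nhds (by linarith : x₂ < x₁ + x₂)),
        self_mem_nhdsWithin] with t ht0 ht1
      exact branch2hi x₁ x₂ t h1 h2 ht1 (le_of_lt ht0)
    have := HL.union HR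
    rw [Set.Iic_union_Ici] at this
    exact hasDerivWithinAt_univ.mp this
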